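/- Let f : [0,1] → ℝ with |f(t)| ≤ M for all t, and suppose f is constant on an open interval (a,b) with 0 < a < b < 1. Then for every x ∈ (a,b) and every n ∈ ℕ, |B_n(f,x) − f(x)| ≤ 2M(exp(−n·H(a‖x)) + exp(−n·H(b‖x))), where H(p‖q) = p·ln(p/q) + (1−p)·ln((1−p)/(1−q)). -/

import Mathlib

open Finset Real

noncomputable def bernsteinOp (n : ℕ) (f : ℝ → ℝ) (x : ℝ) : ℝ :=
  ∑ k ∈ Finset.range (n + 1), (n.choose k : ℝ) * f ((k : ℝ) / (n : ℝ)) * x ^ k * (1 - x) ^ (n - k)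

noncomputable def klDiv (p q : ℝ) : ℝ :=
  p * Real.log (p / q) + (1 - p) * Real.log ((1 - p) / (1 - q))

lemma chernoff (n : ℕ) (p x : ℝ) (hp0 : 0 < p) (hp1 : p < 1) (hx0 : 0 < x) (hx1 : x < 1)
    (g : ℕ → Prop) [DecidablePred g]
    (hg : ∀ k, k ∈ Finset.range (n+1) → g k →
      (1:ℝ) ≤ (p*(1-x)/(x*(1-p))) ^ ((k:ℝ) - (n:ℝ)*p)) :
    ∑ k ∈ Finset.range (n+1),
      (if g k then (n.choose k : ℝ) * x^k * (1-x)^(n-k) else 0)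
      ≤ Real.exp (-(n:ℝ) * klDiv p x) := by
  have h1x : 0 < 1 - x := by linarith
  have h1p : 0 < 1 - p := by linarith
  set r : ℝ := p*(1-x)/(x*(1-p)) with hrdef
  have hr : 0 < r := by positivity
  set A : ℝ := p*(1-x)/(1-p) with hAdef
  have hA : 0 < A := by positivity
  have hxr : x * r = A := by
    rw [hrdef, hAdef]; field_simp
  have key : ∀ k ∈ Finset.range (n+1),
      (if g k then (n.choose k : ℝ) * x^k * (1-x)^(n-k) else 0)
      ≤ (n.choose k : ℝ) * A^k * (1-x)^(n-k) * r ^ (-((n:ℝ)*p)) := by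
    intro k hk
    have hpos : (0:ℝ) ≤ (n.choose k : ℝ) * A^k * (1-x)^(n-k) * r ^ (-((n:ℝ)*p)) := by
      positivity
    by_cases hgk : g k
    · simp only [hgk, if_true]
      have h2 := hg k hk hgk
      have hw : (0:ℝ) ≤ (n.choose k : ℝ) * x^k * (1-x)^(n-k) := by positivity
      calc (n.choose k : ℝ) * x^k * (1-x)^(n-k)
          ≤ ((n.choose k : ℝ) * x^k * (1-x)^(n-k)) * (r ^ ((k:ℝ) - (n:ℝ)*p)) :=
            le_mul_of_one_le_right hw h2
        _ = (n.choose k : ℝ) * A^k * (1-x)^(n-k) * r ^ (-((n:ℝ)*p)) := by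
            have hsplit : r ^ ((k:ℝ) - (n:ℝ)*p) = r ^ (k:ℕ) * r ^ (-((n:ℝ)*p)) := by
              rw [← Real.rpow_natCast r k, ← Real.rpow_add hr]; ring_nf
            rw [hsplit, ← hxr, mul_pow]
            ring
    · simp only [hgk, if_false]
      exact hpos
  refine (Finset.sum_le_sum key).trans ?_
  have hbin : ∑ k ∈ Finset.range (n+1),
      (n.choose k : ℝ) * A^k * (1-x)^(n-k) * r ^ (-((n:ℝ)*p))
      = (A + (1-x))^n * r ^ (-((n:ℝ)*p)) := by
    rw [add_pow, Finset.sum_mul]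
    apply Finset.sum_congr rfl
    intro k _; ring
  rw [hbin]
  have hAx : A + (1-x) = (1-x)/(1-p) := by
    rw [hAdef]; field_simp; ring
  rw [hAx]
  have h1 : ((1-x)/(1-p)) ^ n = Real.exp ((n:ℝ) * Real.log ((1-x)/(1-p))) := by
    rw [← Real.log_pow, Real.exp_log (by positivity)]
  have h2 : r ^ (-((n:ℝ)*p)) = Real.exp (Real.log r * (-((n:ℝ)*p))) := by
    rw [Real.rpow_def_of_pos hr]
  rw [h1, h2, ← Real.exp_add]
  apply le_of_eq
  congr 1
  have hlr : Real.log (p*(1-x)/(x*(1-p)))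
      = Real.log p + Real.log (1-x) - (Real.log x + Real.log (1-p)) := by
    rw [Real.log_div (by positivity) (by positivity),
      Real.log_mul hp0.ne' h1x.ne', Real.log_mul hx0.ne' h1p.ne']
  have hl2 : Real.log ((1-x)/(1-p)) = Real.log (1-x) - Real.log (1-p) :=
    Real.log_div h1x.ne' h1p.ne'
  unfold klDiv
  rw [hrdef, hlr, hl2, Real.log_div hp0.ne' hx0.ne', Real.log_div h1p.ne' h1x.ne']
  ring

theorem bernstein_locally_const_bound (f : ℝ → ℝ) (M a b c : ℝ)
    (hM : ∀ t ∈ Set.Icc (0 : ℝ) 1, |f t| ≤ M)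
    (ha : 0 < a) (hab : a < b) (hb : b < 1)
    (hconst : ∀ t ∈ Set.Ioo a b, f t = c) :
    ∀ x ∈ Set.Ioo a b, ∀ n : ℕ,
      |bernsteinOp n f x - f x| ≤
        2 * M * (Real.exp (-(n : ℝ) * klDiv a x) + Real.exp (-(n : ℝ) * klDiv b x)) := by
  intro x hx n
  classical
  obtain ⟨hax, hxb⟩ := hx
  have hx0 : 0 < x := lt_trans ha hax
  have hx1 : x < 1 := lt_trans hxb hb
  have h1x : 0 < 1 - x := by linarith
  have hM0 : 0 ≤ M := le_trans (abs_nonneg _) (hM 0 ⟨le_refl _, zero_le_one⟩)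
  have hfx : f x = c := hconst x ⟨hax, hxb⟩
  have hc : |c| ≤ M := by
    rw [← hfx]; exact hM x ⟨hx0.le, hx1.le⟩
  set w : ℕ → ℝ := fun k => (n.choose k : ℝ) * x^k * (1-x)^(n-k) with hwdef
  have hw0 : ∀ k, 0 ≤ w k := fun k => by simp only [hwdef]; positivity
  have hsum1 : ∑ k ∈ Finset.range (n+1), w k = 1 := by
    have h := add_pow x (1-x) n
    have h2 : (x + (1-x)) = 1 := by ring
    rw [h2, one_pow] at h
    calc ∑ k ∈ Finset.range (n+1), w k
        = ∑ k ∈ Finset.range (n+1), x ^ k * (1-x) ^ (n-k) * (n.choose k : ℝ) := by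
          apply Finset.sum_congr rfl
          intro k _; simp only [hwdef]; ring
      _ = 1 := h.symm
  have hdiff : bernsteinOp n f x - f x
      = ∑ k ∈ Finset.range (n+1), w k * (f ((k:ℝ)/(n:ℝ)) - c) := by
    have hB : bernsteinOp n f x = ∑ k ∈ Finset.range (n+1), w k * f ((k:ℝ)/(n:ℝ)) := by
      unfold bernsteinOp
      apply Finset.sum_congr rfl
      intro k _; simp only [hwdef]; ring
    have hwc : ∑ k ∈ Finset.range (n+1), w k * c = c := by
      rw [← Finset.sum_mul, hsum1, one_mul]
    rw [hfx, hB]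
    rw [show (∑ k ∈ Finset.range (n+1), w k * f ((k:ℝ)/(n:ℝ))) - c
        = (∑ k ∈ Finset.range (n+1), w k * f ((k:ℝ)/(n:ℝ)))
          - ∑ k ∈ Finset.range (n+1), w k * c by rw [hwc]]
    rw [← Finset.sum_sub_distrib]
    apply Finset.sum_congr rfl
    intro k _; ring
  -- pointwise bound
  have hpt : ∀ k ∈ Finset.range (n+1),
      |w k * (f ((k:ℝ)/(n:ℝ)) - c)|
      ≤ (if (k:ℝ) ≤ (n:ℝ)*a then w k else 0) * (2*M)
        + (if (n:ℝ)*b ≤ (k:ℝ) then w k else 0) * (2*M) := by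
    intro k hk
    have hkn : k ≤ n := Nat.lt_succ_iff.mp (Finset.mem_range.mp hk)
    have hterm1 : (0:ℝ) ≤ (if (k:ℝ) ≤ (n:ℝ)*a then w k else 0) * (2*M) := by
      split <;> [exact mul_nonneg (hw0 k) (by linarith); simp]
    have hterm2 : (0:ℝ) ≤ (if (n:ℝ)*b ≤ (k:ℝ) then w k else 0) * (2*M) := by
      split <;> [exact mul_nonneg (hw0 k) (by linarith); simp]
    by_cases h1 : (k:ℝ) ≤ (n:ℝ)*a
    · have hin : (0:ℝ) ≤ (k:ℝ)/(n:ℝ) ∧ (k:ℝ)/(n:ℝ) ≤ 1 := by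
        constructor
        · positivity
        · rcases Nat.eq_zero_or_pos n with hn | hn
          · subst hn; simp
          · rw [div_le_one (by exact_mod_cast hn)]; exact_mod_cast hkn
      have hf : |f ((k:ℝ)/(n:ℝ)) - c| ≤ 2*M := by
        calc |f ((k:ℝ)/(n:ℝ)) - c| ≤ |f ((k:ℝ)/(n:ℝ))| + |c| := abs_sub _ _
          _ ≤ M + M := add_le_add (hM _ ⟨hin.1, hin.2⟩) hc
          _ = 2*M := by ring
      calc |w k * (f ((k:ℝ)/(n:ℝ)) - c)| = w k * |f ((k:ℝ)/(n:ℝ)) - c| := by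
            rw [abs_mul, abs_of_nonneg (hw0 k)]
        _ ≤ w k * (2*M) := mul_le_mul_of_nonneg_left hf (hw0 k)
        _ ≤ (if (k:ℝ) ≤ (n:ℝ)*a then w k else 0) * (2*M)
            + (if (n:ℝ)*b ≤ (k:ℝ) then w k else 0) * (2*M) := by
            rw [if_pos h1]; linarith
    · by_cases h2 : (n:ℝ)*b ≤ (k:ℝ)
      · have hin : (0:ℝ) ≤ (k:ℝ)/(n:ℝ) ∧ (k:ℝ)/(n:ℝ) ≤ 1 := by
          constructor
          · positivity
          · rcases Nat.eq_zero_or_pos n with hn | hn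
            · subst hn; simp
            · rw [div_le_one (by exact_mod_cast hn)]; exact_mod_cast hkn
        have hf : |f ((k:ℝ)/(n:ℝ)) - c| ≤ 2*M := by
          calc |f ((k:ℝ)/(n:ℝ)) - c| ≤ |f ((k:ℝ)/(n:ℝ))| + |c| := abs_sub _ _
            _ ≤ M + M := add_le_add (hM _ ⟨hin.1, hin.2⟩) hc
            _ = 2*M := by ring
        calc |w k * (f ((k:ℝ)/(n:ℝ)) - c)| = w k * |f ((k:ℝ)/(n:ℝ)) - c| := by
              rw [abs_mul, abs_of_nonneg (hw0 k)]
          _ ≤ w k * (2*M) := mul_le_mul_of_nonneg_left hf (hw0 k)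
          _ ≤ (if (k:ℝ) ≤ (n:ℝ)*a then w k else 0) * (2*M)
              + (if (n:ℝ)*b ≤ (k:ℝ) then w k else 0) * (2*M) := by
              rw [if_pos h2]; linarith
      · -- middle: f (k/n) = c
        push_neg at h1 h2
        have hn0 : 0 < (n:ℝ) := by
          by_contra hcon
          push_neg at hcon
          have hn : (n:ℝ) = 0 := le_antisymm hcon (Nat.cast_nonneg n)
          rw [hn] at h1 h2
          simp only [zero_mul] at h1 h2
          have := Nat.cast_nonneg (α := ℝ) k
          linarith
        have hmid : f ((k:ℝ)/(n:ℝ)) = c := by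
          apply hconst
          constructor
          · rw [lt_div_iff₀ hn0]; nlinarith
          · rw [div_lt_iff₀ hn0]; nlinarith
        rw [hmid]
        simp only [sub_self, mul_zero, abs_zero]
        linarith
  have habs : |bernsteinOp n f x - f x|
      ≤ ∑ k ∈ Finset.range (n+1),
        ((if (k:ℝ) ≤ (n:ℝ)*a then w k else 0) * (2*M)
          + (if (n:ℝ)*b ≤ (k:ℝ) then w k else 0) * (2*M)) := by
    rw [hdiff]
    exact (Finset.abs_sum_le_sum_abs _ _).trans (Finset.sum_le_sum hpt)
  refine habs.trans ?_
  rw [Finset.sum_add_distrib, ← Finset.sum_mul, ← Finset.sum_mul]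
  have hta : ∑ k ∈ Finset.range (n+1), (if (k:ℝ) ≤ (n:ℝ)*a then w k else 0)
      ≤ Real.exp (-(n:ℝ) * klDiv a x) := by
    apply chernoff n a x ha (lt_trans hab hb) hx0 hx1
    intro k _ hgk
    have h1a : 0 < 1 - a := by linarith
    have hr1 : a*(1-x)/(x*(1-a)) ≤ 1 := by
      rw [div_le_one (mul_pos hx0 h1a)]; nlinarith
    have hr0 : 0 < a*(1-x)/(x*(1-a)) := div_pos (mul_pos ha h1x) (mul_pos hx0 h1a)
    have he : (k:ℝ) - (n:ℝ)*a ≤ 0 := by linarith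
    calc (1:ℝ) = (a*(1-x)/(x*(1-a))) ^ (0:ℝ) := by rw [Real.rpow_zero]
      _ ≤ (a*(1-x)/(x*(1-a))) ^ ((k:ℝ) - (n:ℝ)*a) :=
        Real.rpow_le_rpow_of_exponent_ge hr0 hr1 he
  have htb : ∑ k ∈ Finset.range (n+1), (if (n:ℝ)*b ≤ (k:ℝ) then w k else 0)
      ≤ Real.exp (-(n:ℝ) * klDiv b x) := by
    apply chernoff n b x (lt_trans ha hab) hb hx0 hx1
    intro k _ hgk
    have h1b : 0 < 1 - b := by linarith
    have hr1 : 1 ≤ b*(1-x)/(x*(1-b)) := by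
      rw [le_div_iff₀ (mul_pos hx0 h1b)]; nlinarith
    have he : (0:ℝ) ≤ (k:ℝ) - (n:ℝ)*b := by linarith
    calc (1:ℝ) = (b*(1-x)/(x*(1-b))) ^ (0:ℝ) := by rw [Real.rpow_zero]
      _ ≤ (b*(1-x)/(x*(1-b))) ^ ((k:ℝ) - (n:ℝ)*b) :=
        Real.rpow_le_rpow_of_exponent_le hr1 he
  calc (∑ k ∈ Finset.range (n+1), (if (k:ℝ) ≤ (n:ℝ)*a then w k else 0)) * (2*M)
        + (∑ k ∈ Finset.range (n+1), (if (n:ℝ)*b ≤ (k:ℝ) then w k else 0)) * (2*M)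
      ≤ Real.exp (-(n:ℝ) * klDiv a x) * (2*M) + Real.exp (-(n:ℝ) * klDiv b x) * (2*M) :=
        add_le_add (mul_le_mul_of_nonneg_right hta (by linarith))
          (mul_le_mul_of_nonneg_right htb (by linarith))
    _ = 2 * M * (Real.exp (-(n : ℝ) * klDiv a x) + Real.exp (-(n : ℝ) * klDiv b x)) := by ring
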